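/- The Banach space c₀ does not have the p-Dunford-Pettis relatively compact property for any 1 ≤ p ≤ ∞; indeed the sequence of unit coordinate vectors (e_n) in c₀ is weakly p-summable, forms a Dunford-Pettis set, and has norm 1 for all n. -/

import Mathlib

open Filter Topology Set
open scoped ENNReal

noncomputable section

/-- A sequence in a normed space is weakly null. -/
def WeaklyNull {E : Type*} [NormedAddCommGroup E] [NormedSpace ℝ E] (x : ℕ → E) : Prop :=
  ∀ φ : E →L[ℝ] ℝ, Tendsto (fun n => φ (x n)) atTop (𝓝 0)

/-- A bounded set on which every weakly null sequence of functionals converges uniformly. -/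
def DunfordPettisSet {E : Type*} [NormedAddCommGroup E] [NormedSpace ℝ E] (K : Set E) : Prop :=
  Bornology.IsBounded K ∧ ∀ f : ℕ → (E →L[ℝ] ℝ), WeaklyNull f →
    ∀ ε > 0, ∃ N : ℕ, ∀ n ≥ N, ∀ x ∈ K, |f n x| < ε

/-- Weakly `p`-summable sequence; for `p = ∞` this means weakly null. -/
def WeaklyPSummable (p : ℝ≥0∞) {E : Type*} [NormedAddCommGroup E] [NormedSpace ℝ E]
    (x : ℕ → E) : Prop :=
  if p = ∞ then WeaklyNull x else ∀ φ : E →L[ℝ] ℝ, Memℓp (fun n => φ (x n)) p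

def NormNull {E : Type*} [NormedAddCommGroup E] (x : ℕ → E) : Prop :=
  Tendsto (fun n => ‖x n‖) atTop (𝓝 0)

def PRightNull (p : ℝ≥0∞) {E : Type*} [NormedAddCommGroup E] [NormedSpace ℝ E]
    (x : ℕ → E) : Prop :=
  WeaklyPSummable p x ∧ DunfordPettisSet (Set.range x)

def WeaklyPCauchy (p : ℝ≥0∞) {E : Type*} [NormedAddCommGroup E] [NormedSpace ℝ E]
    (x : ℕ → E) : Prop :=
  ∀ k l : ℕ → ℕ, StrictMono k → StrictMono l →
    WeaklyPSummable p (fun n => x (k n) - x (l n))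

def PRightCauchy (p : ℝ≥0∞) {E : Type*} [NormedAddCommGroup E] [NormedSpace ℝ E]
    (x : ℕ → E) : Prop :=
  WeaklyPCauchy p x ∧ DunfordPettisSet (Set.range x)

/-- `p`-Dunford-Pettis relatively compact property. -/
def HasDPrcP (p : ℝ≥0∞) (E : Type*) [NormedAddCommGroup E] [NormedSpace ℝ E] : Prop :=
  ∀ x : ℕ → E, PRightNull p x → NormNull x

/-- A (not necessarily linear) map is Dunford-Pettis `p`-convergent. -/
def DPpConvergent (p : ℝ≥0∞) {E F : Type*} [NormedAddCommGroup E] [NormedSpace ℝ E]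
    [NormedAddCommGroup F] (f : E → F) : Prop :=
  ∀ x : ℕ → E, PRightNull p x → NormNull (fun n => f (x n))

/-- A map is `p`-convergent. -/
def PConvergent (p : ℝ≥0∞) {E F : Type*} [NormedAddCommGroup E] [NormedSpace ℝ E]
    [NormedAddCommGroup F] (f : E → F) : Prop :=
  ∀ x : ℕ → E, WeaklyPSummable p x → NormNull (fun n => f (x n))

/-- The adjoint of a continuous linear operator between normed spaces. -/
def opAdjoint {E F : Type*} [NormedAddCommGroup E] [NormedSpace ℝ E]
    [NormedAddCommGroup F] [NormedSpace ℝ F] (T : E →L[ℝ] F) :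
    (F →L[ℝ] ℝ) →L[ℝ] (E →L[ℝ] ℝ) :=
  (ContinuousLinearMap.compL ℝ E F ℝ).flip T



-- auxiliary lemmas
section AuxLemmas
open scoped ZeroAtInfty


lemma c0_sum_apply (S : Finset ℕ) (g : ℕ → C₀(ℕ, ℝ)) (m : ℕ) :
    (∑ i ∈ S, g i) m = ∑ i ∈ S, g i m := by
  classical
  induction S using Finset.induction with
  | empty => simp
  | insert _ _ h ih =>
    rw [Finset.sum_insert h, Finset.sum_insert h, ZeroAtInftyContinuousMap.add_apply, ih]

lemma c0_norm_one (e : ℕ → C₀(ℕ, ℝ)) (he : ∀ n m : ℕ, e n m = if m = n then 1 else 0)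
    (n : ℕ) : ‖e n‖ = 1 := by
  rw [← ZeroAtInftyContinuousMap.norm_toBCF_eq_norm]
  apply le_antisymm
  · refine (BoundedContinuousFunction.norm_le zero_le_one).2 fun m => ?_
    show ‖e n m‖ ≤ 1
    rw [he n m]
    split <;> simp
  · have h := (e n).toBCF.norm_coe_le_norm n
    have : (e n).toBCF n = e n n := rfl
    rw [this, he n n] at h
    simpa using h

lemma c0_finset_bound (e : ℕ → C₀(ℕ, ℝ)) (he : ∀ n m : ℕ, e n m = if m = n then 1 else 0)
    (φ : C₀(ℕ, ℝ) →L[ℝ] ℝ) (S : Finset ℕ) : ∑ m ∈ S, |φ (e m)| ≤ ‖φ‖ := by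
  classical
  set s : ℕ → ℝ := fun m => if 0 ≤ φ (e m) then 1 else -1 with hs
  set g : C₀(ℕ, ℝ) := ∑ m ∈ S, s m • e m with hg
  have hφg : φ g = ∑ m ∈ S, |φ (e m)| := by
    rw [hg, map_sum]
    refine Finset.sum_congr rfl fun m _ => ?_
    rw [map_smul, smul_eq_mul, hs]
    dsimp only
    split
    · rw [one_mul, abs_of_nonneg ‹_›]
    · rw [neg_one_mul, (abs_of_neg (lt_of_not_ge ‹_›)).symm]
  have hgnorm : ‖g‖ ≤ 1 := by
    rw [← ZeroAtInftyContinuousMap.norm_toBCF_eq_norm]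
    refine (BoundedContinuousFunction.norm_le zero_le_one).2 fun m' => ?_
    show ‖g m'‖ ≤ 1
    have hval : ∀ m ∈ S, (s m • e m) m' = if m' = m then s m else 0 := by
      intro m _
      rw [ZeroAtInftyContinuousMap.smul_apply, he, smul_eq_mul, mul_ite, mul_one, mul_zero]
    rw [hg, c0_sum_apply, Finset.sum_congr rfl hval, Finset.sum_ite_eq]
    rw [Real.norm_eq_abs]
    split
    · rw [hs]; dsimp only; split <;> norm_num
    · norm_num
  calc ∑ m ∈ S, |φ (e m)| = φ g := hφg.symm
    _ ≤ |φ g| := le_abs_self _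
    _ ≤ ‖φ‖ * ‖g‖ := φ.le_opNorm g
    _ ≤ ‖φ‖ * 1 := by gcongr
    _ = ‖φ‖ := mul_one _

lemma c0_summable (e : ℕ → C₀(ℕ, ℝ)) (he : ∀ n m : ℕ, e n m = if m = n then 1 else 0)
    (φ : C₀(ℕ, ℝ) →L[ℝ] ℝ) : Summable fun m => |φ (e m)| :=
  summable_of_sum_range_le (fun _ => abs_nonneg _) fun n => c0_finset_bound e he φ (Finset.range n)

lemma c0_tsum_le (e : ℕ → C₀(ℕ, ℝ)) (he : ∀ n m : ℕ, e n m = if m = n then 1 else 0)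
    (φ : C₀(ℕ, ℝ) →L[ℝ] ℝ) : ∑' m, |φ (e m)| ≤ ‖φ‖ :=
  Summable.tsum_le_of_sum_range_le (c0_summable e he φ) fun n => c0_finset_bound e he φ (Finset.range n)

lemma c0_exists_phi (e : ℕ → C₀(ℕ, ℝ)) (he : ∀ n m : ℕ, e n m = if m = n then 1 else 0)
    (s : ℕ → ℝ) (hs : ∀ k, |s k| ≤ 1) :
    ∃ Φ : (C₀(ℕ, ℝ) →L[ℝ] ℝ) →L[ℝ] ℝ, ∀ φ, Φ φ = ∑' k, s k * φ (e k) := by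
  have hsum : ∀ φ : C₀(ℕ, ℝ) →L[ℝ] ℝ, Summable fun k => s k * φ (e k) := by
    intro φ
    refine Summable.of_abs (Summable.of_nonneg_of_le (fun k => abs_nonneg _) (fun k => ?_)
      (c0_summable e he φ))
    rw [abs_mul]
    exact mul_le_of_le_one_left (abs_nonneg _) (hs k)
  have habs : ∀ φ : C₀(ℕ, ℝ) →L[ℝ] ℝ, Summable fun k => |s k * φ (e k)| := by
    intro φ
    refine Summable.of_nonneg_of_le (fun k => abs_nonneg _) (fun k => ?_) (c0_summable e he φ)
    rw [abs_mul]
    exact mul_le_of_le_one_left (abs_nonneg _) (hs k)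
  let L : (C₀(ℕ, ℝ) →L[ℝ] ℝ) →ₗ[ℝ] ℝ :=
    { toFun := fun φ => ∑' k, s k * φ (e k)
      map_add' := fun φ ψ => by
        simp only [ContinuousLinearMap.add_apply, mul_add]
        exact Summable.tsum_add (hsum φ) (hsum ψ)
      map_smul' := fun c φ => by
        simp only [ContinuousLinearMap.coe_smul', Pi.smul_apply, smul_eq_mul, RingHom.id_apply]
        rw [← tsum_mul_left]
        congr 1; funext k; ring }
  have hbound : ∀ φ : C₀(ℕ, ℝ) →L[ℝ] ℝ, ‖L φ‖ ≤ 1 * ‖φ‖ := by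
    intro φ
    rw [one_mul]
    show ‖∑' k, s k * φ (e k)‖ ≤ ‖φ‖
    calc ‖∑' k, s k * φ (e k)‖ ≤ ∑' k, ‖s k * φ (e k)‖ := norm_tsum_le_tsum_norm (by
          simpa only [Real.norm_eq_abs] using habs φ)
      _ ≤ ∑' k, |φ (e k)| := by
          refine Summable.tsum_le_tsum (fun k => ?_) (by simpa only [Real.norm_eq_abs] using habs φ)
            (c0_summable e he φ)
          rw [Real.norm_eq_abs, abs_mul]
          exact mul_le_of_le_one_left (abs_nonneg _) (hs k)
      _ ≤ ‖φ‖ := c0_tsum_le e he φ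
  refine ⟨⟨L, ?_⟩, fun φ => rfl⟩
  exact AddMonoidHomClass.continuous_of_bound L 1 hbound

lemma c0_wps (p : ℝ≥0∞) (hp : 1 ≤ p) (e : ℕ → C₀(ℕ, ℝ))
    (he : ∀ n m : ℕ, e n m = if m = n then 1 else 0) : WeaklyPSummable p e := by
  unfold WeaklyPSummable
  split_ifs with h
  · intro φ
    rw [tendsto_zero_iff_abs_tendsto_zero]
    exact (c0_summable e he φ).tendsto_atTop_zero
  · intro φ
    have h1 : Memℓp (fun n => φ (e n)) 1 := by
      apply memℓp_gen
      simp only [ENNReal.toReal_one, Real.rpow_one, Real.norm_eq_abs]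
      exact (c0_summable e he φ).congr (fun n => rfl)
    exact h1.of_exponent_ge hp

set_option maxHeartbeats 1000000 in
lemma c0_dp (e : ℕ → C₀(ℕ, ℝ)) (he : ∀ n m : ℕ, e n m = if m = n then 1 else 0) :
    DunfordPettisSet (Set.range e) := by
  classical
  constructor
  · refine (Metric.isBounded_closedBall (x := (0 : C₀(ℕ, ℝ))) (r := 1)).subset ?_
    rintro x ⟨n, rfl⟩
    rw [Metric.mem_closedBall, dist_zero_right, c0_norm_one e he n]
  · intro f hf ε hε
    by_contra hcon
    push_neg at hcon
    have H : ∀ N : ℕ, ∃ n ≥ N, ∃ m : ℕ, ε ≤ |f n (e m)| := by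
      intro N
      obtain ⟨n, hn, x, ⟨m, rfl⟩, hx⟩ := hcon N
      exact ⟨n, hn, m, hx⟩
    have hpt : ∀ m : ℕ, Tendsto (fun n => f n (e m)) atTop (𝓝 0) := by
      intro m
      have := hf (NormedSpace.inclusionInDoubleDual ℝ (C₀(ℕ, ℝ)) (e m))
      simpa only [NormedSpace.dual_def] using this
    have hsmall : ∀ (K : ℕ) (δ : ℕ → ℝ), (∀ m, 0 < δ m) →
        ∃ N, ∀ n ≥ N, ∀ m ≤ K, |f n (e m)| < δ m := by
      intro K δ hδ
      have h2 : ∀ᶠ n in atTop, ∀ m ∈ Finset.Iic K, |f n (e m)| < δ m := by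
        rw [Filter.eventually_all_finset]
        intro m _
        have habs : Tendsto (fun n => |f n (e m)|) atTop (𝓝 0) := by
          simpa using (hpt m).abs
        exact habs.eventually_lt_const (hδ m)
      obtain ⟨N, hN⟩ := eventually_atTop.1 h2
      exact ⟨N, fun n hn m hm => hN n hn m (Finset.mem_Iic.2 hm)⟩
    have htail : ∀ n : ℕ, ∃ T : ℕ, ∑' k, |f n (e (k + T))| < ε / 4 := by
      intro n
      have h4 : (0 : ℝ) < ε / 4 := by linarith
      obtain ⟨T, hT⟩ :=
        ((tendsto_sum_nat_add (fun k => |f n (e k)|)).eventually_lt_const h4).exists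
      exact ⟨T, hT⟩
    choose T hT using htail
    have step : ∀ q : ℕ × ℕ, ∃ q' : ℕ × ℕ, q.1 < q'.1 ∧ q.2 < q'.2 ∧ T q.1 ≤ q'.2 ∧
        ε ≤ |f q'.1 (e q'.2)| ∧ ∀ k ≤ q.2, |f q'.1 (e k)| ≤ ε / 8 * (1 / 2) ^ k := by
      rintro ⟨n₀, m₀⟩
      obtain ⟨N1, hN1⟩ := hsmall m₀ (fun k => ε / 8 * (1 / 2) ^ k) (fun k => by positivity)
      obtain ⟨N2, hN2⟩ := hsmall (max m₀ (T n₀)) (fun _ => ε) (fun _ => hε)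
      obtain ⟨n, hn, m, hm⟩ := H (max (max N1 N2) (n₀ + 1))
      have hn1 : n ≥ N1 := le_trans (le_trans (le_max_left _ _) (le_max_left _ _)) hn
      have hn2 : n ≥ N2 := le_trans (le_trans (le_max_right _ _) (le_max_left _ _)) hn
      have hmgt : max m₀ (T n₀) < m := by
        by_contra hle
        push_neg at hle
        exact absurd hm (not_le.2 (hN2 n hn2 m hle))
      refine ⟨(n, m), ?_, ?_, ?_, hm, fun k hk => le_of_lt (hN1 n hn1 k hk)⟩
      · exact lt_of_lt_of_le (Nat.lt_succ_self n₀) (le_trans (le_max_right _ _) hn)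
      · exact lt_of_le_of_lt (le_max_left _ _) hmgt
      · exact le_of_lt (lt_of_le_of_lt (le_max_right _ _) hmgt)
    choose next hnext1 hnext2 hnext3 hnext4 hnext5 using step
    set seq : ℕ → ℕ × ℕ := fun i => Nat.rec (next (0, 0)) (fun _ q => next q) i with hseq
    set ν : ℕ → ℕ := fun i => (seq i).1 with hν
    set μ : ℕ → ℕ := fun i => (seq i).2 with hμ
    have hseqsucc : ∀ i, seq (i + 1) = next (seq i) := fun i => rfl
    have hμmono : StrictMono μ := strictMono_nat_of_lt_succ fun i => by
      rw [hμ]; dsimp only; rw [hseqsucc]; exact hnext2 (seq i)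
    have hνmono : StrictMono ν := strictMono_nat_of_lt_succ fun i => by
      rw [hν]; dsimp only; rw [hseqsucc]; exact hnext1 (seq i)
    have hμinj : Function.Injective μ := hμmono.injective
    have hbig : ∀ i, ε ≤ |f (ν i) (e (μ i))| := by
      intro i
      cases i with
      | zero => exact hnext4 (0, 0)
      | succ j => exact hnext4 (seq j)
    have hTle : ∀ i, T (ν i) ≤ μ (i + 1) := fun i => hnext3 (seq i)
    have hpast : ∀ i k, k ≤ μ i → |f (ν (i + 1)) (e k)| ≤ ε / 8 * (1 / 2) ^ k :=
      fun i k hk => hnext5 (seq i) k hk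
    set s : ℕ → ℝ := fun k => if h : ∃ i, μ i = k then
        (if 0 ≤ f (ν h.choose) (e k) then 1 else -1) else 0 with hsdef
    have hs1 : ∀ k, |s k| ≤ 1 := by
      intro k; rw [hsdef]; dsimp only
      split
      · split <;> norm_num
      · norm_num
    have hschoose : ∀ i, s (μ i) = if 0 ≤ f (ν i) (e (μ i)) then 1 else -1 := by
      intro i
      rw [hsdef]; dsimp only
      have hex : ∃ j, μ j = μ i := ⟨i, rfl⟩
      rw [dif_pos hex]
      have : hex.choose = i := hμinj hex.choose_spec
      rw [this]
    obtain ⟨Φ, hΦ⟩ := c0_exists_phi e he s hs1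
    have key : ∀ i, ε / 2 ≤ |Φ (f (ν i))| := by
      intro i
      have hA : Summable fun k => |f (ν i) (e k)| := c0_summable e he (f (ν i))
      have hAμ : Summable fun j => |f (ν i) (e (μ j))| := hA.comp_injective hμinj
      have hsummul : Summable fun k => s k * f (ν i) (e k) := by
        refine Summable.of_abs (Summable.of_nonneg_of_le (fun k => abs_nonneg _)
          (fun k => ?_) hA)
        rw [abs_mul]
        exact mul_le_of_le_one_left (abs_nonneg _) (hs1 k)
      have hsupp : Function.support (fun k => s k * f (ν i) (e k)) ⊆ Set.range μ := by
        intro k hk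
        by_contra hkr
        apply hk
        have hnex : ¬ ∃ j, μ j = k := fun ⟨j, hj⟩ => hkr ⟨j, hj⟩
        show s k * f (ν i) (e k) = 0
        rw [hsdef]; dsimp only
        rw [dif_neg hnex, zero_mul]
      have htsum_eq : ∑' j, s (μ j) * f (ν i) (e (μ j)) = ∑' k, s k * f (ν i) (e k) :=
        hμinj.tsum_eq hsupp
      have hsumj : Summable fun j => s (μ j) * f (ν i) (e (μ j)) :=
        hsummul.comp_injective hμinj
      have hsplit : ∑' j, s (μ j) * f (ν i) (e (μ j)) =
          s (μ i) * f (ν i) (e (μ i)) +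
            ∑' j, if j = i then 0 else s (μ j) * f (ν i) (e (μ j)) :=
        Summable.tsum_eq_add_tsum_ite hsumj i
      have hdiag : s (μ i) * f (ν i) (e (μ i)) = |f (ν i) (e (μ i))| := by
        rw [hschoose i]
        split
        · rw [one_mul, abs_of_nonneg ‹_›]
        · rw [neg_one_mul, (abs_of_neg (lt_of_not_ge ‹_›)).symm]
      -- summability of the pieces
      have hDsum : Summable fun j => if j = i then 0 else |f (ν i) (e (μ j))| := by
        refine Summable.of_nonneg_of_le (fun j => ?_) (fun j => ?_) hAμ
        · split <;> [exact le_rfl; exact abs_nonneg _]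
        · split <;> [exact abs_nonneg _; exact le_rfl]
      have hRsum : Summable fun j => if j = i then 0 else s (μ j) * f (ν i) (e (μ j)) := by
        refine Summable.of_abs (Summable.of_nonneg_of_le (fun j => abs_nonneg _)
          (fun j => ?_) hDsum)
        split
        · simp
        · rw [abs_mul]
          exact mul_le_of_le_one_left (abs_nonneg _) (hs1 _)
      have habsum : Summable fun j => |if j = i then 0 else s (μ j) * f (ν i) (e (μ j))| := by
        refine Summable.of_nonneg_of_le (fun j => abs_nonneg _) (fun j => ?_) hDsum
        split
        · simp
        · rw [abs_mul]
          exact mul_le_of_le_one_left (abs_nonneg _) (hs1 _)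
      have hRabs : |∑' j, if j = i then 0 else s (μ j) * f (ν i) (e (μ j))| ≤
          ∑' j, if j = i then 0 else |f (ν i) (e (μ j))| := by
        refine le_trans ?_ (Summable.tsum_le_tsum (f := fun j => |if j = i then 0 else
            s (μ j) * f (ν i) (e (μ j))|) (fun j => ?_) habsum hDsum)
        · have hnormsum : Summable fun j => ‖if j = i then 0 else
              s (μ j) * f (ν i) (e (μ j))‖ := by
            simpa only [Real.norm_eq_abs] using habsum
          simpa only [Real.norm_eq_abs] using norm_tsum_le_tsum_norm hnormsum
        · show |if j = i then 0 else s (μ j) * f (ν i) (e (μ j))| ≤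
            (if j = i then 0 else |f (ν i) (e (μ j))|)
          by_cases h : j = i
          · simp [h]
          · rw [if_neg h, if_neg h, abs_mul]
            exact mul_le_of_le_one_left (abs_nonneg _) (hs1 _)
      -- split the error sum into past and future parts
      have hDltSum : Summable fun j => if j < i then |f (ν i) (e (μ j))| else 0 := by
        refine Summable.of_nonneg_of_le (fun j => ?_) (fun j => ?_) hAμ
        · split <;> [exact abs_nonneg _; exact le_rfl]
        · split <;> [exact le_rfl; exact abs_nonneg _]
      have hDgtSum : Summable fun j => if i < j then |f (ν i) (e (μ j))| else 0 := by
        refine Summable.of_nonneg_of_le (fun j => ?_) (fun j => ?_) hAμ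
        · split <;> [exact abs_nonneg _; exact le_rfl]
        · split <;> [exact le_rfl; exact abs_nonneg _]
      have hDeq : ∀ j, (if j = i then 0 else |f (ν i) (e (μ j))|) =
          (if j < i then |f (ν i) (e (μ j))| else 0) +
            (if i < j then |f (ν i) (e (μ j))| else 0) := by
        intro j
        rcases lt_trichotomy j i with h | h | h
        · rw [if_neg (ne_of_lt h), if_pos h, if_neg (by omega), add_zero]
        · rw [if_pos h, if_neg (by omega), if_neg (by omega), add_zero]
        · rw [if_neg (by omega), if_neg (by omega), if_pos h, zero_add]
      have hlt : ∑' j, (if j < i then |f (ν i) (e (μ j))| else 0) ≤ ε / 4 := by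
        have heq : ∑' j, (if j < i then |f (ν i) (e (μ j))| else 0) =
            ∑ j ∈ Finset.range i, |f (ν i) (e (μ j))| := by
          rw [tsum_eq_sum (s := Finset.range i)
            (fun j hj => if_neg (fun h => hj (Finset.mem_range.2 h)))]
          exact Finset.sum_congr rfl fun j hj => if_pos (Finset.mem_range.1 hj)
        rw [heq]
        have hterm : ∀ j ∈ Finset.range i, |f (ν i) (e (μ j))| ≤ ε / 8 * (1 / 2) ^ j := by
          intro j hj
          have hj' := Finset.mem_range.1 hj
          obtain ⟨i', rfl⟩ : ∃ i', i = i' + 1 := ⟨i - 1, by omega⟩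
          have hle : μ j ≤ μ i' := hμmono.monotone (by omega)
          calc |f (ν (i' + 1)) (e (μ j))| ≤ ε / 8 * (1 / 2) ^ (μ j) := hpast i' (μ j) hle
            _ ≤ ε / 8 * (1 / 2) ^ j := by
                have h2 : ((1 : ℝ) / 2) ^ (μ j) ≤ (1 / 2) ^ j :=
                  pow_le_pow_of_le_one (by norm_num) (by norm_num) hμmono.le_apply
                have h8 : (0 : ℝ) ≤ ε / 8 := by linarith
                exact mul_le_mul_of_nonneg_left h2 h8
        calc ∑ j ∈ Finset.range i, |f (ν i) (e (μ j))|
            ≤ ∑ j ∈ Finset.range i, ε / 8 * (1 / 2) ^ j := Finset.sum_le_sum hterm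
          _ = ε / 8 * ∑ j ∈ Finset.range i, (1 / 2) ^ j := by rw [Finset.mul_sum]
          _ ≤ ε / 8 * 2 := by
              have hg : ∑ j ∈ Finset.range i, ((1 : ℝ) / 2) ^ j ≤ 2 := by
                refine le_trans (Summable.sum_le_tsum (Finset.range i) (fun _ _ => by positivity)
                  summable_geometric_two) (le_of_eq tsum_geometric_two)
              have h8 : (0 : ℝ) ≤ ε / 8 := by linarith
              exact mul_le_mul_of_nonneg_left hg h8
          _ = ε / 4 := by ring
      have hgt : ∑' j, (if i < j then |f (ν i) (e (μ j))| else 0) ≤ ε / 4 := by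
        have hinj : Function.Injective (fun j : ℕ => j + i + 1) := fun a b h => by
          have h' : a + i + 1 = b + i + 1 := h
          omega
        have hre : ∑' j, |f (ν i) (e (μ (j + i + 1)))| =
            ∑' j, (if i < j then |f (ν i) (e (μ j))| else 0) := by
          have hs2 : Function.support (fun j => if i < j then |f (ν i) (e (μ j))| else 0) ⊆
              Set.range (fun j : ℕ => j + i + 1) := by
            intro k hk
            rcases lt_or_ge i k with h | h
            · exact ⟨k - i - 1, by show k - i - 1 + i + 1 = k; omega⟩
            · exact absurd (if_neg (not_lt.2 h)) hk
          have := hinj.tsum_eq (f := fun j => if i < j then |f (ν i) (e (μ j))| else 0) hs2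
          rw [← this]
          congr 1
          funext j
          exact (if_pos (show i < j + i + 1 by omega)).symm
        rw [← hre]
        refine le_trans ?_ (le_of_lt (hT (ν i)))
        refine Summable.tsum_le_tsum_of_inj (fun j => μ (j + i + 1) - T (ν i)) ?_
          (fun c _ => abs_nonneg _) (fun j => ?_) ?_ ?_
        · intro a b hab
          have ha : T (ν i) ≤ μ (a + i + 1) :=
            le_trans (hTle i) (hμmono.monotone (by omega : i + 1 ≤ a + i + 1))
          have hb : T (ν i) ≤ μ (b + i + 1) :=
            le_trans (hTle i) (hμmono.monotone (by omega : i + 1 ≤ b + i + 1))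
          have hab' : μ (a + i + 1) - T (ν i) = μ (b + i + 1) - T (ν i) := hab
          have h5 : μ (a + i + 1) = μ (b + i + 1) := by omega
          have h6 : a + i + 1 = b + i + 1 := hμinj h5
          omega
        · have hj : T (ν i) ≤ μ (j + i + 1) :=
            le_trans (hTle i) (hμmono.monotone (by omega : i + 1 ≤ j + i + 1))
          have heq2 : μ (j + i + 1) - T (ν i) + T (ν i) = μ (j + i + 1) := by omega
          simp only [heq2]
          exact le_rfl
        · exact hA.comp_injective fun a b hab => hinj (hμinj hab)
        · exact (summable_nat_add_iff (T (ν i))).2 hA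
      -- put the pieces together
      have hD : ∑' j, (if j = i then 0 else |f (ν i) (e (μ j))|) ≤ ε / 2 := by
        calc ∑' j, (if j = i then 0 else |f (ν i) (e (μ j))|)
            = ∑' j, ((if j < i then |f (ν i) (e (μ j))| else 0) +
              (if i < j then |f (ν i) (e (μ j))| else 0)) := by
              exact tsum_congr hDeq
          _ = ∑' j, (if j < i then |f (ν i) (e (μ j))| else 0) +
              ∑' j, (if i < j then |f (ν i) (e (μ j))| else 0) := Summable.tsum_add hDltSum hDgtSum
          _ ≤ ε / 4 + ε / 4 := add_le_add hlt hgt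
          _ = ε / 2 := by ring
      have hΦval : Φ (f (ν i)) = |f (ν i) (e (μ i))| +
          ∑' j, if j = i then 0 else s (μ j) * f (ν i) (e (μ j)) := by
        rw [hΦ (f (ν i)), ← htsum_eq, hsplit, hdiag]
      have hRb : |∑' j, if j = i then 0 else s (μ j) * f (ν i) (e (μ j))| ≤ ε / 2 :=
        le_trans hRabs hD
      have hlow : ε / 2 ≤ Φ (f (ν i)) := by
        rw [hΦval]
        have := hbig i
        have := neg_abs_le (∑' j, if j = i then 0 else s (μ j) * f (ν i) (e (μ j)))
        linarith
      exact le_trans hlow (le_abs_self _)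
    have h0 : Tendsto (fun i => Φ (f (ν i))) atTop (𝓝 0) := (hf Φ).comp hνmono.tendsto_atTop
    have h0' : Tendsto (fun i => |Φ (f (ν i))|) atTop (𝓝 0) := by simpa using h0.abs
    obtain ⟨i, hi⟩ := (h0'.eventually_lt_const (by linarith : (0 : ℝ) < ε / 2)).exists
    exact absurd (key i) (not_le.2 hi)

end AuxLemmas

open scoped ZeroAtInfty in
theorem stmt4 (p : ℝ≥0∞) (hp : 1 ≤ p) :
    ¬ HasDPrcP p C₀(ℕ, ℝ) ∧
      ∀ e : ℕ → C₀(ℕ, ℝ), (∀ n m : ℕ, e n m = if m = n then 1 else 0) →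
        WeaklyPSummable p e ∧ DunfordPettisSet (Set.range e) ∧ ∀ n, ‖e n‖ = 1 := by
  refine ⟨?_, fun e he => ⟨c0_wps p hp e he, c0_dp e he, c0_norm_one e he⟩⟩
  intro h
  have hcont : ∀ n : ℕ, Continuous fun m : ℕ => if m = n then (1 : ℝ) else 0 :=
    fun n => continuous_of_discreteTopology
  have hzero : ∀ n : ℕ,
      Tendsto (fun m : ℕ => if m = n then (1 : ℝ) else 0) (cocompact ℕ) (𝓝 0) := by
    intro n
    rw [Filter.cocompact_eq_cofinite]
    have hev : ∀ᶠ m in (Filter.cofinite : Filter ℕ), (if m = n then (1 : ℝ) else 0) = 0 := by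
      rw [Filter.eventually_cofinite]
      refine Set.Finite.subset (Set.finite_singleton n) ?_
      intro m hm
      simp only [Set.mem_setOf_eq] at hm
      by_contra hc
      simp only [Set.mem_singleton_iff] at hc
      exact hm (if_neg hc)
    exact Filter.Tendsto.congr' (Filter.EventuallyEq.symm hev) tendsto_const_nhds
  set e : ℕ → C₀(ℕ, ℝ) := fun n => ⟨⟨fun m => if m = n then 1 else 0, hcont n⟩, hzero n⟩
    with hedef
  have he : ∀ n m : ℕ, e n m = if m = n then 1 else 0 := fun n m => rfl
  have hnn : NormNull e := h e ⟨c0_wps p hp e he, c0_dp e he⟩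
  have h1 : Tendsto (fun _ : ℕ => (1 : ℝ)) atTop (𝓝 0) :=
    (tendsto_congr fun n => c0_norm_one e he n).1 hnn
  exact absurd (tendsto_nhds_unique h1 tendsto_const_nhds) zero_ne_one
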